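/- For any points p1, p2, p3 in a metric space with distance function dist, any positive integer z, and any ε > 0, we have dist(p1,p2)^z ≤ (1+ε)^(z-1) · dist(p1,p3)^z + ((1+ε)/ε)^(z-1) · dist(p2,p3)^z. -/

import Mathlib

lemma aux_pow_ineq (a b : ℝ) (ha : 0 ≤ a) (hb : 0 ≤ b) (z : ℕ) (hz : 0 < z)
    (ε : ℝ) (hε : 0 < ε) :
    (a + b) ^ z ≤ (1 + ε) ^ (z - 1) * a ^ z + ((1 + ε) / ε) ^ (z - 1) * b ^ z := by
  have h1 : (0:ℝ) < 1 + ε := by linarith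
  set l : ℝ := 1 / (1 + ε) with hl
  set m : ℝ := ε / (1 + ε) with hm
  have hl0 : 0 < l := by positivity
  have hm0 : 0 < m := by positivity
  have hsum : l + m = 1 := by rw [hl, hm]; field_simp
  have hconv := (convexOn_pow (𝕜 := ℝ) z).2 (x := a / l) (y := b / m)
    (by exact div_nonneg ha hl0.le) (by exact div_nonneg hb hm0.le)
    hl0.le hm0.le hsum
  rw [smul_eq_mul, smul_eq_mul, smul_eq_mul, smul_eq_mul] at hconv
  have hx : l * (a / l) + m * (b / m) = a + b := by
    field_simp
  rw [hx] at hconv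
  refine hconv.trans_eq ?_
  obtain ⟨k, rfl⟩ : ∃ k, z = k + 1 := ⟨z - 1, (Nat.succ_pred_eq_of_pos hz).symm⟩
  simp only [Nat.add_sub_cancel]
  have ea : l * (a / l) ^ (k + 1) = (1 + ε) ^ k * a ^ (k + 1) := by
    have h : a / l = a * (1 + ε) := by rw [hl]; field_simp
    rw [h, mul_pow, hl, pow_succ]
    field_simp
    ring
  have eb : m * (b / m) ^ (k + 1) = ((1 + ε) / ε) ^ k * b ^ (k + 1) := by
    have h : b / m = b * ((1 + ε) / ε) := by rw [hm]; field_simp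
    rw [h, mul_pow, hm, pow_succ]
    field_simp
    have hq : ε * ((1 + ε) / ε) = 1 + ε := mul_div_cancel₀ _ hε.ne'
    linear_combination b ^ k * b * ((1 + ε) / ε) ^ k * hq
  rw [ea, eb]

theorem stmt_0 {X : Type*} [MetricSpace X] (p1 p2 p3 : X) (z : ℕ) (hz : 0 < z)
    (ε : ℝ) (hε : 0 < ε) :
    dist p1 p2 ^ z ≤ (1 + ε) ^ (z - 1) * dist p1 p3 ^ z
      + ((1 + ε) / ε) ^ (z - 1) * dist p2 p3 ^ z := by
  have h1 : dist p1 p2 ^ z ≤ (dist p1 p3 + dist p2 p3) ^ z :=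
    pow_le_pow_left₀ dist_nonneg (dist_triangle_right p1 p2 p3) z
  exact h1.trans (aux_pow_ineq _ _ dist_nonneg dist_nonneg z hz ε hε)
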